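/- Setting t = 1 in Y(t,x) = (1 − tx + (tx−x)C(x/(1−tx)))/((1 − x·C(x/(1−tx)))(1 − tx)) yields Y(1,x) = 1/(1 − x·C(x/(1−x))) = 2/(1 + x + √((1−x)(1−5x))), where C is the Catalan generating function. -/

import Mathlib

/-- The Catalan generating function `C(y) = (1 - √(1-4y))/(2y)`. -/
noncomputable def Cfun (y : ℝ) : ℝ := (1 - Real.sqrt (1 - 4 * y)) / (2 * y)

/-- `Y(t,x)`, the closed form from Lemma 6 of the paper. -/
noncomputable def Yfun (t x : ℝ) : ℝ :=
  (1 - t * x + (t * x - x) * Cfun (x / (1 - t * x))) /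
    ((1 - x * Cfun (x / (1 - t * x))) * (1 - t * x))

theorem stmt18 (x : ℝ) (h0 : 0 < x) (h5 : x < 1 / 5) :
    Yfun 1 x = 1 / (1 - x * Cfun (x / (1 - x))) ∧
    1 / (1 - x * Cfun (x / (1 - x))) =
      2 / (1 + x + Real.sqrt ((1 - x) * (1 - 5 * x))) := by
  have hx1 : (0:ℝ) < 1 - x := by linarith
  have h5x : (0:ℝ) < 1 - 5 * x := by linarith
  set s := Real.sqrt (1 - x) with hs
  set t := Real.sqrt (1 - 5 * x) with ht
  have hs2 : s ^ 2 = 1 - x := Real.sq_sqrt hx1.le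
  have ht2 : t ^ 2 = 1 - 5 * x := Real.sq_sqrt h5x.le
  have hspos : 0 < s := Real.sqrt_pos.2 hx1
  have htpos : 0 < t := Real.sqrt_pos.2 h5x
  have hmul : Real.sqrt ((1 - x) * (1 - 5 * x)) = s * t := Real.sqrt_mul hx1.le _
  have h4 : 1 - 4 * (x / (1 - x)) = (1 - 5 * x) / (1 - x) := by
    field_simp; ring
  have hsq : Real.sqrt (1 - 4 * (x / (1 - x))) = t / s := by
    rw [h4, Real.sqrt_div h5x.le, ← hs, ← ht]
  have hC : Cfun (x / (1 - x)) = (1 - x - s * t) / (2 * x) := by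
    unfold Cfun
    rw [hsq]
    field_simp
    linear_combination t * hs2
  have hden : 1 - x * Cfun (x / (1 - x)) = (1 + x + s * t) / 2 := by
    rw [hC]; field_simp; ring
  have hdpos : (0:ℝ) < (1 + x + s * t) / 2 := by positivity
  constructor
  · unfold Yfun
    simp only [one_mul, sub_self, zero_mul, add_zero]
    rw [hden]
    have hne : 1 + x + s * t ≠ 0 := by positivity
    field_simp
  · rw [hden, hmul]
    rw [one_div_div]
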